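/- For every tree T of order n > 3, ⌊(n−1)²/2⌋ ≤ Mo(T) ≤ (n−1)(n−2), with equality on the left if and only if T ≅ P_n and equality on the right if and only if T ≅ S_n. -/

import Mathlib

open SimpleGraph Finset

open scoped Classical in
/-- The number of vertices strictly closer to `u` than to `v`. -/
noncomputable def nCloser {V : Type*} [Fintype V] (G : SimpleGraph V) (u v : V) : ℕ :=
  (Finset.univ.filter (fun w => G.dist w u < G.dist w v)).card

/-- The contribution `|n_u - n_v|` of a pair of vertices. -/
noncomputable def contrib {V : Type*} [Fintype V] (G : SimpleGraph V) (u v : V) : ℕ :=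
  ((nCloser G u v : ℤ) - (nCloser G v u : ℤ)).natAbs

open scoped Classical in
/-- The Mostar index `Mo(G) = Σ_{uv ∈ E(G)} |n_u − n_v|`. -/
noncomputable def mostar {V : Type*} [Fintype V] (G : SimpleGraph V) : ℕ :=
  ∑ e ∈ G.edgeFinset, Sym2.lift
    ⟨fun u v => contrib G u v,
     fun a b => by simp only [contrib]; omega⟩ e

/-- The star `S_{n+1}` with center `0` and `n` leaves. -/
def starGraph (n : ℕ) : SimpleGraph (Fin (n + 1)) where
  Adj u v := u ≠ v ∧ (u = 0 ∨ v = 0)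
  symm := ⟨fun _ _ ⟨h1, h2⟩ => ⟨h1.symm, h2.symm⟩⟩
  loopless := ⟨fun _ ⟨h1, _⟩ => h1 rfl⟩

set_option linter.unusedSectionVars false
set_option linter.unusedVariables false
set_option maxHeartbeats 1000000

section MostarAux

variable {V : Type*} {G : SimpleGraph V}

namespace MostarAux

lemma path_length_eq_dist (hT : G.IsTree) {u v : V} {p : G.Walk u v} (hp : p.IsPath) :
    p.length = G.dist u v := by
  obtain ⟨q, hq, hlen⟩ := hT.isConnected.exists_path_of_dist u v
  rw [← hlen, (hT.existsUnique_path u v).unique hp hq]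

lemma dist_add_of_mem_support (hT : G.IsTree) {x z y : V} {p : G.Walk x z} (hp : p.IsPath)
    (hy : y ∈ p.support) : G.dist x z = G.dist x y + G.dist y z := by
  classical
  have h1 := path_length_eq_dist hT (hp.takeUntil hy)
  have h2 := path_length_eq_dist hT (hp.dropUntil hy)
  have h3 := congrArg Walk.length (p.take_spec hy)
  rw [Walk.length_append] at h3
  rw [← path_length_eq_dist hT hp]
  omega

lemma mem_support_of_dist_add (hT : G.IsTree) {x z y : V}
    (h : G.dist x z = G.dist x y + G.dist y z)
    {p : G.Walk x z} (hp : p.IsPath) : y ∈ p.support := by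
  obtain ⟨q1, hq1, l1⟩ := hT.isConnected.exists_path_of_dist x y
  obtain ⟨q2, hq2, l2⟩ := hT.isConnected.exists_path_of_dist y z
  have hl : (q1.append q2).length = G.dist x z := by rw [Walk.length_append]; omega
  have hpath : (q1.append q2).IsPath := Walk.isPath_of_length_eq_dist _ hl
  have heq : p = q1.append q2 := (hT.existsUnique_path x z).unique hp hpath
  rw [heq, Walk.mem_support_append_iff]
  exact Or.inl (Walk.end_mem_support q1)

lemma isPath_concat {u v w : V} {p : G.Walk u v} (hp : p.IsPath) (h : G.Adj v w)
    (hw : w ∉ p.support) : (p.concat h).IsPath := by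
  rw [← Walk.isPath_reverse_iff, Walk.reverse_concat, Walk.cons_isPath_iff]
  refine ⟨hp.reverse, by simpa using hw⟩

/-- In a tree, two neighbors of `v` that are both at distance `dist w v - 1` from `w`
are equal. -/
lemma eq_of_adj_dist (hT : G.IsTree) {w v x y : V} (hx : G.Adj x v) (hy : G.Adj y v)
    (h1 : G.dist w v = G.dist w x + 1) (h2 : G.dist w v = G.dist w y + 1) : x = y := by
  by_contra hne
  obtain ⟨q1, hq1, l1⟩ := hT.isConnected.exists_path_of_dist w x
  obtain ⟨q2, hq2, l2⟩ := hT.isConnected.exists_path_of_dist w y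
  have hl1 : (q1.concat hx).length = G.dist w v := by rw [Walk.length_concat]; omega
  have hl2 : (q2.concat hy).length = G.dist w v := by rw [Walk.length_concat]; omega
  have hp1 : (q1.concat hx).IsPath := Walk.isPath_of_length_eq_dist _ hl1
  have hp2 : (q2.concat hy).IsPath := Walk.isPath_of_length_eq_dist _ hl2
  have heq : q1.concat hx = q2.concat hy := (hT.existsUnique_path w v).unique hp1 hp2
  have hymem : y ∈ (q1.concat hx).support := by
    rw [heq, Walk.support_concat]
    exact by simp [List.concat_eq_append]
  rw [Walk.support_concat] at hymem
  rw [List.mem_append, List.mem_singleton] at hymem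
  rcases hymem with hmem | rfl
  · have hsplit := dist_add_of_mem_support hT hq1 hmem
    have : G.dist y x ≠ 0 := fun hh =>
      hne ((hT.isConnected.dist_eq_zero_iff.mp hh).symm)
    omega
  · exact hy.ne rfl

lemma parity (hT : G.IsTree) {u v : V} (h : G.Adj u v) (w : V) :
    G.dist w v = G.dist w u + 1 ∨ G.dist w u = G.dist w v + 1 := by
  obtain ⟨p, hp, hl⟩ := hT.isConnected.exists_path_of_dist w u
  by_cases hv : v ∈ p.support
  · right
    have hs := dist_add_of_mem_support hT hp hv
    have h1 : G.dist v u = 1 := dist_eq_one_iff_adj.mpr h.symm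
    omega
  · left
    have hp2 : (p.concat h).IsPath := isPath_concat hp h hv
    have := path_length_eq_dist hT hp2
    rw [Walk.length_concat] at this
    omega

end MostarAux

end MostarAux
open SimpleGraph Finset

namespace MostarAux

variable {V : Type*} [Fintype V] {G : SimpleGraph V} {r : V}

open scoped Classical in
/-- Vertices `z` whose path to the root `r` passes through `v` (the subtree below `v`). -/
noncomputable def Sv (G : SimpleGraph V) (r v : V) : Finset V :=
  univ.filter (fun z => G.dist z r = G.dist z v + G.dist v r)

noncomputable def sv (G : SimpleGraph V) (r v : V) : ℕ := (Sv G r v).card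

lemma mem_Sv {v z : V} : z ∈ Sv G r v ↔ G.dist z r = G.dist z v + G.dist v r := by
  simp [Sv]

lemma self_mem_Sv {v : V} : v ∈ Sv G r v := by simp [mem_Sv]

lemma not_r_mem_Sv (hT : G.IsTree) {v : V} (hv : v ≠ r) : r ∉ Sv G r v := by
  rw [mem_Sv, SimpleGraph.dist_self, SimpleGraph.dist_comm]
  intro h
  exact hv (hT.isConnected.dist_eq_zero_iff.mp (by omega))

lemma Sv_subset_of_mem (hT : G.IsTree) {v w : V} (hw : w ∈ Sv G r v) :
    Sv G r w ⊆ Sv G r v := by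
  rw [mem_Sv] at hw
  intro x hx
  rw [mem_Sv] at hx ⊢
  have t1 : G.dist x v ≤ G.dist x w + G.dist w v := hT.isConnected.dist_triangle
  have t2 : G.dist x r ≤ G.dist x v + G.dist v r := hT.isConnected.dist_triangle
  omega

lemma eq_of_mem_Sv_mem_Sv (hT : G.IsTree) {v w : V} (h1 : w ∈ Sv G r v)
    (h2 : v ∈ Sv G r w) : v = w := by
  rw [mem_Sv] at h1 h2
  have hc : G.dist w v = G.dist v w := SimpleGraph.dist_comm ..
  have : G.dist v w = 0 := by omega
  exact hT.isConnected.dist_eq_zero_iff.mp this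

lemma exists_parent (hT : G.IsTree) {v : V} (hv : v ≠ r) :
    ∃ x, G.Adj v x ∧ G.dist x r + 1 = G.dist v r := by
  obtain ⟨p, hp, hl⟩ := hT.isConnected.exists_path_of_dist v r
  cases p with
  | nil => exact absurd rfl hv
  | cons h q =>
    rename_i c
    refine ⟨c, h, ?_⟩
    have hq : q.IsPath := ((Walk.cons_isPath_iff _ _).mp hp).1
    have := path_length_eq_dist hT hq
    rw [Walk.length_cons] at hl
    omega

/-- Core characterization: if `v` is the deeper endpoint of the edge `vx`, then
the subtree `Sv r v` is exactly the set of vertices strictly closer to `v`. -/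
lemma char_aux (hT : G.IsTree) :
    ∀ (d : ℕ) {v x z : V}, G.Adj v x → G.dist v r = G.dist x r + 1 → G.dist x r = d →
      G.dist z x = G.dist z v + 1 → G.dist z r = G.dist z v + G.dist v r := by
  intro d
  induction d with
  | zero =>
    intro v x z h hd hx hz
    have : x = r := hT.isConnected.dist_eq_zero_iff.mp hx
    subst this
    omega
  | succ d ih =>
    intro v x z h hd hx hz
    have hxr : x ≠ r := fun hh => by rw [hh, SimpleGraph.dist_self] at hx; omega
    obtain ⟨y, hxy, hy⟩ := exists_parent hT hxr
    have hzy : G.dist z y = G.dist z x + 1 := by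
      rcases parity hT hxy z with hh | hh
      · exact hh
      · exfalso
        have hvy : v = y := eq_of_adj_dist hT (w := z) h hxy.symm (by omega) (by omega)
        rw [hvy] at hd
        omega
    have := ih (v := x) (x := y) (z := z) hxy (by omega) (by omega) hzy
    omega

lemma mem_Sv_iff_dist_lt (hT : G.IsTree) {v x : V} (h : G.Adj v x)
    (hd : G.dist v r = G.dist x r + 1) (z : V) :
    z ∈ Sv G r v ↔ G.dist z v < G.dist z x := by
  have t : G.dist z r ≤ G.dist z x + G.dist x r := hT.isConnected.dist_triangle
  constructor
  · intro hz
    rw [mem_Sv] at hz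
    rcases parity hT h z with hh | hh <;> omega
  · intro hz
    rcases parity hT h z with hh | hh
    · exact mem_Sv.mpr (char_aux hT (G.dist x r) h hd rfl hh)
    · omega

open scoped Classical in
noncomputable def children (G : SimpleGraph V) (r v : V) : Finset V :=
  univ.filter (fun c => G.Adj v c ∧ G.dist c r = G.dist v r + 1)

lemma mem_children {v c : V} :
    c ∈ children G r v ↔ G.Adj v c ∧ G.dist c r = G.dist v r + 1 := by simp [children]

lemma child_mem_Sv (hT : G.IsTree) {v c : V} (hc : c ∈ children G r v) : c ∈ Sv G r v := by
  rw [mem_children] at hc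
  rw [mem_Sv, hc.2, SimpleGraph.dist_comm (u := c), dist_eq_one_iff_adj.mpr hc.1]
  omega

lemma dist_parent_of_mem_Sv (hT : G.IsTree) {v c w : V} (hvc : G.Adj v c)
    (hd : G.dist c r = G.dist v r + 1) (hw : w ∈ Sv G r c) :
    G.dist w v = G.dist w c + 1 := by
  have := (mem_Sv_iff_dist_lt hT hvc.symm (by omega) w).mp hw
  rcases parity hT hvc w with hh | hh <;> omega

lemma exists_child_of_mem (hT : G.IsTree) {v w : V} (hw : w ∈ Sv G r v) (hne : w ≠ v) :
    ∃ c ∈ children G r v, w ∈ Sv G r c := by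
  rw [mem_Sv] at hw
  obtain ⟨p, hp, hl⟩ := hT.isConnected.exists_path_of_dist v w
  cases p with
  | nil => exact absurd rfl hne.symm
  | cons h q =>
    rename_i c
    have hq : q.IsPath := ((Walk.cons_isPath_iff _ _).mp hp).1
    have hql : q.length = G.dist c w := path_length_eq_dist hT hq
    rw [Walk.length_cons] at hl
    have hcw : G.dist c w + 1 = G.dist v w := by omega
    have hwc : G.dist w c + 1 = G.dist w v := by
      have e1 : G.dist w c = G.dist c w := SimpleGraph.dist_comm ..
      have e2 : G.dist w v = G.dist v w := SimpleGraph.dist_comm ..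
      omega
    have hwv0 : G.dist w v ≠ 0 := fun hh =>
      hne (hT.isConnected.dist_eq_zero_iff.mp hh)
    have hchild : G.dist c r = G.dist v r + 1 := by
      have e1 : G.dist r c = G.dist c r := SimpleGraph.dist_comm ..
      have e2 : G.dist r v = G.dist v r := SimpleGraph.dist_comm ..
      have t : G.dist w r ≤ G.dist w c + G.dist c r := hT.isConnected.dist_triangle
      rcases parity hT h r with hh | hh <;> omega
    refine ⟨c, mem_children.mpr ⟨h, hchild⟩, ?_⟩
    rw [mem_Sv]
    omega

lemma children_disjoint (hT : G.IsTree) {v c c' : V} (hc : c ∈ children G r v)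
    (hc' : c' ∈ children G r v) (hne : c ≠ c') :
    Disjoint (Sv G r c) (Sv G r c') := by
  rw [Finset.disjoint_left]
  intro w hw hw'
  rw [mem_children] at hc hc'
  have h1 := dist_parent_of_mem_Sv hT hc.1 hc.2 hw
  have h2 := dist_parent_of_mem_Sv hT hc'.1 hc'.2 hw'
  exact hne (eq_of_adj_dist hT hc.1.symm hc'.1.symm h1 h2)

lemma not_mem_Sv_child (hT : G.IsTree) {v c : V} (hc : c ∈ children G r v) :
    v ∉ Sv G r c := fun hv =>
  (mem_children.mp hc).1.ne (eq_of_mem_Sv_mem_Sv hT (child_mem_Sv hT hc) hv)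

open scoped Classical in
lemma Sv_eq_insert_biUnion (hT : G.IsTree) (v : V) :
    Sv G r v = insert v ((children G r v).biUnion (fun c => Sv G r c)) := by
  ext w
  simp only [Finset.mem_insert, Finset.mem_biUnion]
  constructor
  · intro hw
    by_cases hne : w = v
    · exact Or.inl hne
    · exact Or.inr (exists_child_of_mem hT hw hne)
  · rintro (rfl | ⟨c, hc, hw⟩)
    · exact self_mem_Sv
    · exact Sv_subset_of_mem hT (child_mem_Sv hT hc) hw

open scoped Classical in
lemma sv_card_eq (hT : G.IsTree) (v : V) :
    sv G r v = 1 + ∑ c ∈ children G r v, sv G r c := by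
  classical
  have hnot : v ∉ (children G r v).biUnion (fun c => Sv G r c) := by
    simp only [Finset.mem_biUnion]
    rintro ⟨c, hc, hv⟩
    exact not_mem_Sv_child hT hc hv
  have hdisj : ∀ c ∈ children G r v, ∀ c' ∈ children G r v, c ≠ c' →
      Disjoint (Sv G r c) (Sv G r c') := fun c hc c' hc' hne =>
    children_disjoint hT hc hc' hne
  rw [sv, Sv_eq_insert_biUnion hT v, Finset.card_insert_of_notMem hnot,
    Finset.card_biUnion hdisj]
  rw [Nat.add_comm]
  rfl

lemma sv_pos {v : V} : 1 ≤ sv G r v := Finset.card_pos.mpr ⟨v, self_mem_Sv⟩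

lemma sv_le_of_mem (hT : G.IsTree) {v w : V} (hw : w ∈ Sv G r v) :
    sv G r w ≤ sv G r v := Finset.card_le_card (Sv_subset_of_mem hT hw)

lemma sv_lt_of_mem (hT : G.IsTree) {v w : V} (hw : w ∈ Sv G r v) (hne : w ≠ v) :
    sv G r w < sv G r v := by
  apply Finset.card_lt_card
  rw [Finset.ssubset_iff_of_subset (Sv_subset_of_mem hT hw)]
  refine ⟨v, self_mem_Sv, fun hv => hne (eq_of_mem_Sv_mem_Sv hT hw hv).symm⟩

open scoped Classical in
lemma sv_le_card_sub_one (hT : G.IsTree) {v : V} (hv : v ≠ r) :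
    sv G r v ≤ Fintype.card V - 1 := by
  have : Sv G r v ⊆ univ.erase r := fun x hx => by
    rw [Finset.mem_erase]
    exact ⟨fun hh => not_r_mem_Sv hT hv (hh ▸ hx), Finset.mem_univ x⟩
  have h2 := Finset.card_le_card this
  rw [Finset.card_erase_of_mem (Finset.mem_univ r), Finset.card_univ] at h2
  exact h2

end MostarAux
open SimpleGraph Finset

namespace MostarAux

variable {V : Type*} [Fintype V] {G : SimpleGraph V} {r : V}

open scoped Classical in
lemma lemmaD (hT : G.IsTree) :
    ∀ (n : ℕ) (v : V), sv G r v ≤ n → v ≠ r → ∀ j : ℕ,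
      min j (sv G r v - 1) ≤ ((Sv G r v).filter (fun w => sv G r w ≤ j)).card := by
  intro n
  induction n with
  | zero =>
    intro v hv
    exact absurd hv (by have := sv_pos (G := G) (r := r) (v := v); omega)
  | succ n ih =>
    intro v hv hvr j
    have hsvcard : (Sv G r v).card = sv G r v := rfl
    by_cases hcase : sv G r v - 1 ≤ j
    · have hsub : (Sv G r v).erase v ⊆ (Sv G r v).filter (fun w => sv G r w ≤ j) := by
        intro w hw
        rw [Finset.mem_erase] at hw
        rw [Finset.mem_filter]
        refine ⟨hw.2, ?_⟩
        have := sv_lt_of_mem hT hw.2 hw.1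
        omega
      have hle := Finset.card_le_card hsub
      rw [Finset.card_erase_of_mem self_mem_Sv, hsvcard] at hle
      omega
    · push_neg at hcase
      by_cases hex : ∃ c ∈ children G r v, j + 1 ≤ sv G r c
      · obtain ⟨c, hc, hjc⟩ := hex
        have hcr : c ≠ r := by
          intro h
          have hmem := child_mem_Sv hT hc
          rw [h] at hmem
          exact not_r_mem_Sv hT hvr hmem
        have hcv : c ≠ v := ((mem_children.mp hc).1.ne).symm
        have hlt : sv G r c < sv G r v := sv_lt_of_mem hT (child_mem_Sv hT hc) hcv
        have hihc := ih c (by omega) hcr j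
        have hsub := Finset.filter_subset_filter (fun w => sv G r w ≤ j)
          (Sv_subset_of_mem hT (child_mem_Sv hT hc))
        have hle := Finset.card_le_card hsub
        omega
      · push_neg at hex
        have hsub : (Sv G r v).erase v ⊆ (Sv G r v).filter (fun w => sv G r w ≤ j) := by
          intro w hw
          rw [Finset.mem_erase] at hw
          rw [Finset.mem_filter]
          refine ⟨hw.2, ?_⟩
          obtain ⟨c, hc, hwc⟩ := exists_child_of_mem hT hw.2 hw.1
          have h1 := sv_le_of_mem hT hwc
          have h2 := hex c hc
          omega
        have hle := Finset.card_le_card hsub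
        rw [Finset.card_erase_of_mem self_mem_Sv, hsvcard] at hle
        omega

lemma laminar (hT : G.IsTree) {v w z : V} (hzv : z ∈ Sv G r v) (hzw : z ∈ Sv G r w) :
    Sv G r v ⊆ Sv G r w ∨ Sv G r w ⊆ Sv G r v := by
  classical
  obtain ⟨p, hp, hl⟩ := hT.isConnected.exists_path_of_dist z r
  have hvmem : v ∈ p.support := mem_support_of_dist_add hT (mem_Sv.mp hzv) hp
  have hwmem : w ∈ p.support := mem_support_of_dist_add hT (mem_Sv.mp hzw) hp
  by_cases hq : w ∈ (p.dropUntil v hvmem).support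
  · left
    have hh : G.dist v r = G.dist v w + G.dist w r :=
      dist_add_of_mem_support hT (hp.dropUntil hvmem) hq
    exact Sv_subset_of_mem hT (mem_Sv.mpr hh)
  · right
    have hwtake : w ∈ (p.takeUntil v hvmem).support := by
      have hspec := p.take_spec hvmem
      rw [← hspec, Walk.mem_support_append_iff] at hwmem
      tauto
    have h1 : G.dist z v = G.dist z w + G.dist w v :=
      dist_add_of_mem_support hT (hp.takeUntil hvmem) hwtake
    apply Sv_subset_of_mem hT (mem_Sv.mpr ?_)
    rw [mem_Sv] at hzv hzw
    omega

open scoped Classical in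
lemma count_main (hT : G.IsTree) (j : ℕ) (hj : 2 * j + 1 ≤ Fintype.card V) :
    2 * j ≤ ((univ.erase r).filter (fun v => sv G r v ≤ j)).card
      + ((univ.erase r).filter (fun v => Fintype.card V - j ≤ sv G r v)).card := by
  classical
  set n := Fintype.card V with hn
  by_cases hA : ∃ v, v ≠ r ∧ j + 1 ≤ sv G r v ∧
      ∃ w, w ≠ r ∧ j + 1 ≤ sv G r w ∧ Disjoint (Sv G r v) (Sv G r w)
  · obtain ⟨v, hvr, hjv, w, hwr, hjw, hdisj⟩ := hA
    have hDv := lemmaD hT (sv G r v) v le_rfl hvr j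
    have hDw := lemmaD hT (sv G r w) w le_rfl hwr j
    rw [min_eq_left (by omega)] at hDv hDw
    set Fv := (Sv G r v).filter (fun w => sv G r w ≤ j) with hFv
    set Fw := (Sv G r w).filter (fun w' => sv G r w' ≤ j) with hFw
    have hdisjF : Disjoint Fv Fw :=
      Finset.disjoint_filter_filter hdisj
    have hsub : Fv ∪ Fw ⊆ (univ.erase r).filter (fun v => sv G r v ≤ j) := by
      intro x hx
      rw [Finset.mem_union] at hx
      rw [Finset.mem_filter, Finset.mem_erase]
      rcases hx with hx | hx
      · rw [hFv, Finset.mem_filter] at hx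
        exact ⟨⟨fun hh => not_r_mem_Sv hT hvr (hh ▸ hx.1), Finset.mem_univ x⟩, hx.2⟩
      · rw [hFw, Finset.mem_filter] at hx
        exact ⟨⟨fun hh => not_r_mem_Sv hT hwr (hh ▸ hx.1), Finset.mem_univ x⟩, hx.2⟩
    have hcard := Finset.card_le_card hsub
    rw [Finset.card_union_of_disjoint hdisjF] at hcard
    omega
  · push_neg at hA
    set A' := (univ.erase r).filter (fun v => j + 1 ≤ sv G r v) with hA'
    set B' := (univ.erase r).filter (fun v => n - j ≤ sv G r v) with hB'
    have hBA : B' ⊆ A' := by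
      intro v hv
      rw [hB', Finset.mem_filter] at hv
      rw [hA', Finset.mem_filter]
      exact ⟨hv.1, by omega⟩
    have hinj : Set.InjOn (fun v => sv G r v) (A' : Set V) := by
      intro v hv w hw heq
      simp only [Finset.coe_filter, Set.mem_setOf_eq, hA', Finset.mem_erase] at hv hw
      obtain ⟨z, hz1, hz2⟩ := Finset.not_disjoint_iff.mp
        (hA v hv.1.1 hv.2 w hw.1.1 hw.2)
      have hEq : Sv G r v = Sv G r w := by
        rcases laminar hT hz1 hz2 with hsub | hsub
        · exact Finset.eq_of_subset_of_card_le hsub (le_of_eq heq.symm)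
        · exact (Finset.eq_of_subset_of_card_le hsub (le_of_eq heq)).symm
      have h1 : w ∈ Sv G r v := by rw [hEq]; exact self_mem_Sv
      have h2 : v ∈ Sv G r w := by rw [← hEq]; exact self_mem_Sv
      exact eq_of_mem_Sv_mem_Sv hT h1 h2
    have hmap : ∀ v ∈ A' \ B', sv G r v ∈ Finset.Icc (j + 1) (n - 1 - j) := by
      intro v hv
      rw [Finset.mem_sdiff] at hv
      obtain ⟨hva, hvb⟩ := hv
      rw [hA', Finset.mem_filter, Finset.mem_erase] at hva
      have h1 := sv_le_card_sub_one hT hva.1.1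
      have h2 : ¬ (n - j ≤ sv G r v) := by
        intro hh
        exact hvb (by
          rw [hB', Finset.mem_filter, Finset.mem_erase]
          exact ⟨hva.1, hh⟩)
      rw [Finset.mem_Icc]
      omega
    have hcard1 : (A' \ B').card ≤ (Finset.Icc (j + 1) (n - 1 - j)).card :=
      Finset.card_le_card_of_injOn _ hmap
        (hinj.mono (by exact_mod_cast Finset.coe_subset.mpr (Finset.sdiff_subset)))
    rw [Nat.card_Icc] at hcard1
    have hcard2 : (A' \ B').card = A'.card - B'.card := Finset.card_sdiff_of_subset hBA
    have hsplit : ((univ.erase r).filter (fun v => sv G r v ≤ j)).card + A'.card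
        = (univ.erase r).card := by
      rw [hA']
      have hfe : (univ.erase r).filter (fun v => j + 1 ≤ sv G r v)
          = (univ.erase r).filter (fun v => ¬ (sv G r v ≤ j)) := by
        ext x
        simp only [Finset.mem_filter]
        constructor
        · rintro ⟨h1, h2⟩; exact ⟨h1, by omega⟩
        · rintro ⟨h1, h2⟩; exact ⟨h1, by omega⟩
      rw [hfe, Finset.card_filter_add_card_filter_not]
    have hB'le : B'.card ≤ A'.card := Finset.card_le_card hBA
    have hcarderase : (univ.erase r).card = n - 1 := by
      rw [Finset.card_erase_of_mem (Finset.mem_univ r), Finset.card_univ]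
    omega

end MostarAux
namespace MostarAux

variable {V : Type*} [Fintype V] {G : SimpleGraph V} {r : V}

open scoped Classical in
noncomputable def par (G : SimpleGraph V) (r v : V) : V :=
  if h : ∃ x, G.Adj v x ∧ G.dist x r + 1 = G.dist v r then h.choose else v

lemma par_spec (hT : G.IsTree) {v : V} (hv : v ≠ r) :
    G.Adj v (par G r v) ∧ G.dist (par G r v) r + 1 = G.dist v r := by
  classical
  have h := exists_parent hT hv
  rw [par]
  rw [dif_pos h]
  exact h.choose_spec

lemma par_eq (hT : G.IsTree) {v x : V} (h : G.Adj v x)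
    (hd : G.dist x r + 1 = G.dist v r) : par G r v = x := by
  have hv : v ≠ r := by
    intro hh
    rw [hh, SimpleGraph.dist_self] at hd
    omega
  obtain ⟨h1, h2⟩ := par_spec (r := r) hT hv
  have e1 : G.dist r v = G.dist v r := SimpleGraph.dist_comm ..
  have e2 : G.dist r x = G.dist x r := SimpleGraph.dist_comm ..
  have e3 : G.dist r (par G r v) = G.dist (par G r v) r := SimpleGraph.dist_comm ..
  exact eq_of_adj_dist hT (w := r) h1.symm h.symm (by omega) (by omega)

lemma nCloser_eq_sv (hT : G.IsTree) {v : V} (hv : v ≠ r) :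
    nCloser G v (par G r v) = sv G r v := by
  obtain ⟨h1, h2⟩ := par_spec (r := r) hT hv
  have hset : Finset.univ.filter (fun w => G.dist w v < G.dist w (par G r v)) = Sv G r v := by
    ext w
    simp only [Finset.mem_filter, Finset.mem_univ, true_and]
    exact (mem_Sv_iff_dist_lt hT h1 (by omega) w).symm
  rw [nCloser]
  rw [show (Finset.univ.filter (fun w => G.dist w v < G.dist w (par G r v))) = Sv G r v
    from hset]
  rfl

lemma nCloser_par_eq (hT : G.IsTree) {v : V} (hv : v ≠ r) :
    nCloser G (par G r v) v = Fintype.card V - sv G r v := by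
  classical
  obtain ⟨h1, h2⟩ := par_spec (r := r) hT hv
  have hset : Finset.univ.filter (fun w => G.dist w (par G r v) < G.dist w v)
      = (Sv G r v)ᶜ := by
    ext w
    simp only [Finset.mem_filter, Finset.mem_univ, true_and, Finset.mem_compl]
    rw [mem_Sv_iff_dist_lt hT h1 (by omega) w]
    rcases parity hT h1 w with hh | hh <;> constructor <;> intro <;> omega
  rw [nCloser]
  rw [show (Finset.univ.filter (fun w => G.dist w (par G r v) < G.dist w v)) = (Sv G r v)ᶜ
    from hset]
  rw [Finset.card_compl]
  rfl

open scoped Classical in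
lemma edgeFinset_eq_image (hT : G.IsTree) (r : V) :
    G.edgeFinset = (univ.erase r).image (fun v => s(v, par G r v)) := by
  classical
  ext e
  induction e with
  | _ a b =>
    simp only [mem_edgeFinset, Finset.mem_image, mem_edgeSet]
    constructor
    · intro hab
      have e1 : G.dist r a = G.dist a r := SimpleGraph.dist_comm ..
      have e2 : G.dist r b = G.dist b r := SimpleGraph.dist_comm ..
      rcases parity hT hab r with hh | hh
      · -- dist r b = dist r a + 1 : b is the child
        have hbr : b ≠ r := by
          intro h
          subst h
          rw [SimpleGraph.dist_self] at hh
          omega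
        refine ⟨b, Finset.mem_erase.mpr ⟨hbr, Finset.mem_univ b⟩, ?_⟩
        rw [par_eq hT hab.symm (by omega)]
        exact Sym2.eq_swap
      · have har : a ≠ r := by
          intro h
          subst h
          rw [SimpleGraph.dist_self] at hh
          omega
        refine ⟨a, Finset.mem_erase.mpr ⟨har, Finset.mem_univ a⟩, ?_⟩
        rw [par_eq hT hab (by omega)]
    · rintro ⟨v, hv, he⟩
      have hadj := (par_spec (r := r) hT (Finset.mem_erase.mp hv).1).1
      rw [Sym2.eq_iff] at he
      rcases he with ⟨rfl, rfl⟩ | ⟨rfl, rfl⟩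
      · exact hadj
      · exact hadj.symm

open scoped Classical in
lemma mostar_eq_sum (hT : G.IsTree) (r : V) :
    mostar G = ∑ v ∈ univ.erase r,
      ((Fintype.card V : ℤ) - 2 * sv G r v).natAbs := by
  classical
  rw [mostar, edgeFinset_eq_image hT r, Finset.sum_image ?hinj]
  case hinj =>
    intro v hv w hw heq
    rw [Sym2.eq_iff] at heq
    rcases heq with ⟨rfl, -⟩ | ⟨hvw, hwv⟩
    · rfl
    · exfalso
      have h1 := (par_spec (r := r) hT (Finset.mem_erase.mp hv).1).2
      have h2 := (par_spec (r := r) hT (Finset.mem_erase.mp hw).1).2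
      rw [← hvw] at h2
      rw [hwv] at h1
      omega
  apply Finset.sum_congr rfl
  intro v hv
  have hvr := (Finset.mem_erase.mp hv).1
  rw [Sym2.lift_mk]
  simp only [contrib]
  rw [nCloser_eq_sv hT hvr, nCloser_par_eq hT hvr]
  have h1 : 1 ≤ sv G r v := sv_pos
  have h2 : sv G r v ≤ Fintype.card V - 1 := sv_le_card_sub_one hT hvr
  have h3 : 0 < Fintype.card V := @Fintype.card_pos V _ hT.isConnected.nonempty
  omega

end MostarAux
namespace MostarAux

variable {V : Type*} [Fintype V] {G : SimpleGraph V} {r : V}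

lemma arith_sum_Icc : ∀ (K n : ℕ), 2 * K ≤ n + 1 →
    ∑ k ∈ Finset.Icc 1 K, (n + 1 - 2 * k) = K * (n - K) := by
  intro K
  induction K with
  | zero => intro n h; simp
  | succ K ih =>
    intro n h
    rw [Finset.sum_Icc_succ_top (by omega), ih n (by omega)]
    have h1 : K ≤ n := by omega
    have h2 : K + 1 ≤ n := by omega
    have h3 : 2 * (K + 1) ≤ n + 1 := h
    zify [h1, h2, h3]
    ring

lemma arith_parity (n : ℕ) (h : 4 ≤ n) :
    (n - 1) ^ 2 / 2 + 2 * ((n / 2) * (n - n / 2)) = (n - 1) * n := by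
  obtain ⟨K, hc⟩ : ∃ K, n = 2 * K ∨ n = 2 * K + 1 := ⟨n / 2, by omega⟩
  have hKK : K ≤ K * K := Nat.le_mul_of_pos_left K (by omega)
  rcases hc with rfl | rfl
  · have e0 : 2 * K / 2 = K := by omega
    rw [e0]
    have e1 : (2 * K - 1) ^ 2 = 4 * (K * K) - 4 * K + 1 := by
      zify [show 1 ≤ 2 * K by omega, show 4 * K ≤ 4 * (K * K) by omega]
      ring
    have e2 : 2 * K - K = K := by omega
    rw [e2]
    have e3 : (2 * K - 1) * (2 * K) = 4 * (K * K) - 2 * K := by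
      zify [show 1 ≤ 2 * K by omega, show 2 * K ≤ 4 * (K * K) by omega]
      ring
    rw [e1, e3]
    omega
  · have e0 : (2 * K + 1) / 2 = K := by omega
    rw [e0]
    have e1 : (2 * K + 1 - 1) ^ 2 = 4 * (K * K) := by
      have h5 : 2 * K + 1 - 1 = 2 * K := by omega
      rw [h5]; ring
    have e2 : 2 * K + 1 - K = K + 1 := by omega
    rw [e1, e2]
    have e3 : K * (K + 1) = K * K + K := by ring
    have e4 : (2 * K + 1 - 1) * (2 * K + 1) = 4 * (K * K) + 2 * K := by
      have h5 : 2 * K + 1 - 1 = 2 * K := by omega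
      rw [h5]; ring
    rw [e3, e4]
    omega

open scoped Classical in
noncomputable def tk (G : SimpleGraph V) (r : V) (k : ℕ) : ℕ :=
  ((univ.erase r).filter
    (fun v => k ≤ min (sv G r v) (Fintype.card V - sv G r v))).card

open scoped Classical in
lemma mostar_add_twoM (hT : G.IsTree) (r : V) :
    mostar G + 2 * (∑ v ∈ univ.erase r,
        min (sv G r v) (Fintype.card V - sv G r v))
      = (Fintype.card V - 1) * Fintype.card V := by
  classical
  rw [mostar_eq_sum hT r, Finset.mul_sum, ← Finset.sum_add_distrib]
  have hterm : ∀ v ∈ univ.erase r,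
      (((Fintype.card V) : ℤ) - 2 * sv G r v).natAbs
        + 2 * min (sv G r v) (Fintype.card V - sv G r v) = Fintype.card V := by
    intro v hv
    have h1 : 1 ≤ sv G r v := sv_pos
    have h2 : sv G r v ≤ Fintype.card V - 1 :=
      sv_le_card_sub_one hT (Finset.mem_erase.mp hv).1
    have h3 : 0 < Fintype.card V := @Fintype.card_pos V _ hT.isConnected.nonempty
    omega
  rw [Finset.sum_congr rfl hterm, Finset.sum_const,
    Finset.card_erase_of_mem (Finset.mem_univ r), Finset.card_univ, smul_eq_mul]

open scoped Classical in
lemma Mtot_eq_sum_tk (hT : G.IsTree) (r : V) :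
    (∑ v ∈ univ.erase r, min (sv G r v) (Fintype.card V - sv G r v))
      = ∑ k ∈ Finset.Icc 1 (Fintype.card V / 2), tk G r k := by
  classical
  have hm : ∀ v ∈ univ.erase r,
      min (sv G r v) (Fintype.card V - sv G r v)
        = ∑ k ∈ Finset.Icc 1 (Fintype.card V / 2),
            (if k ≤ min (sv G r v) (Fintype.card V - sv G r v) then 1 else 0) := by
    intro v hv
    rw [Finset.sum_boole]
    have hfe : (Finset.Icc 1 (Fintype.card V / 2)).filter
        (fun k => k ≤ min (sv G r v) (Fintype.card V - sv G r v))
        = Finset.Icc 1 (min (sv G r v) (Fintype.card V - sv G r v)) := by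
      have h3 : sv G r v ≤ Fintype.card V - 1 :=
        sv_le_card_sub_one hT (Finset.mem_erase.mp hv).1
      have h4 : 1 ≤ sv G r v := sv_pos
      ext k
      simp only [Finset.mem_filter, Finset.mem_Icc]
      omega
    rw [hfe, Nat.card_Icc]
    simp
  rw [Finset.sum_congr rfl hm, Finset.sum_comm]
  apply Finset.sum_congr rfl
  intro k hk
  rw [Finset.sum_boole, tk]
  simp

open scoped Classical in
lemma tk_bound (hT : G.IsTree) (k : ℕ) (hk1 : 1 ≤ k)
    (hk2 : 2 * k ≤ Fintype.card V) :
    tk G r k + 2 * k ≤ Fintype.card V + 1 := by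
  classical
  have hcm := count_main (r := r) hT (k - 1) (by omega)
  have hsplit := Finset.card_filter_add_card_filter_not
    (s := univ.erase r)
    (p := fun v => k ≤ min (sv G r v) (Fintype.card V - sv G r v))
  set F1 := (univ.erase r).filter (fun v => sv G r v ≤ k - 1) with hF1
  set F2 := (univ.erase r).filter
    (fun v => Fintype.card V - (k - 1) ≤ sv G r v) with hF2
  set FN := (univ.erase r).filter
    (fun v => ¬ (k ≤ min (sv G r v) (Fintype.card V - sv G r v))) with hFN
  have hsub : F1 ∪ F2 ⊆ FN := by
    intro x hx
    rw [Finset.mem_union] at hx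
    rw [hFN, Finset.mem_filter]
    have h3 : sv G r x ≤ Fintype.card V - 1 := by
      rcases hx with hx | hx
      · exact sv_le_card_sub_one hT (Finset.mem_erase.mp (Finset.mem_filter.mp hx).1).1
      · exact sv_le_card_sub_one hT (Finset.mem_erase.mp (Finset.mem_filter.mp hx).1).1
    rcases hx with hx | hx <;> rw [Finset.mem_filter] at hx
    · exact ⟨hx.1, by omega⟩
    · exact ⟨hx.1, by have := hx.2; omega⟩
  have hdisj : Disjoint F1 F2 := by
    rw [Finset.disjoint_left]
    intro x h1 h2
    rw [hF1, Finset.mem_filter] at h1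
    rw [hF2, Finset.mem_filter] at h2
    omega
  have hcards := Finset.card_le_card hsub
  rw [Finset.card_union_of_disjoint hdisj] at hcards
  have hcarderase : (univ.erase r).card = Fintype.card V - 1 := by
    rw [Finset.card_erase_of_mem (Finset.mem_univ r), Finset.card_univ]
  have hn4 : 0 < Fintype.card V := @Fintype.card_pos V _ hT.isConnected.nonempty
  rw [hcarderase] at hsplit
  have : 2 * (k - 1) ≤ F1.card + F2.card := hcm
  rw [tk]
  omega

open scoped Classical in
lemma lower_main (hT : G.IsTree) (r : V) (hn : 4 ≤ Fintype.card V) :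
    (Fintype.card V - 1) ^ 2 / 2 ≤ mostar G ∧
    (mostar G = (Fintype.card V - 1) ^ 2 / 2 → tk G r 2 = Fintype.card V - 3) := by
  classical
  set n := Fintype.card V with hn'
  set K := n / 2 with hK
  set M := ∑ v ∈ univ.erase r, min (sv G r v) (n - sv G r v) with hM
  have hmos : mostar G + 2 * M = (n - 1) * n := mostar_add_twoM hT r
  have hMtk : M = ∑ k ∈ Finset.Icc 1 K, tk G r k := Mtot_eq_sum_tk hT r
  have htb : ∀ k ∈ Finset.Icc 1 K, tk G r k ≤ n + 1 - 2 * k := by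
    intro k hk
    rw [Finset.mem_Icc] at hk
    have := tk_bound (r := r) hT k hk.1 (by omega)
    omega
  have hMle : M ≤ K * (n - K) := by
    rw [hMtk]
    calc ∑ k ∈ Finset.Icc 1 K, tk G r k
        ≤ ∑ k ∈ Finset.Icc 1 K, (n + 1 - 2 * k) := Finset.sum_le_sum htb
      _ = K * (n - K) := arith_sum_Icc K n (by omega)
  have hid : (n - 1) ^ 2 / 2 + 2 * (K * (n - K)) = (n - 1) * n := arith_parity n hn
  constructor
  · have h4 : (n - 1) ^ 2 / 2 + 2 * (K * (n - K)) ≤ mostar G + 2 * (K * (n - K)) := by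
      rw [hid, ← hmos]
      omega
    omega
  · intro heq
    have hMeq : M = K * (n - K) := by
      rw [heq] at hmos
      omega
    have hsum_eq : ∑ k ∈ Finset.Icc 1 K, tk G r k
        = ∑ k ∈ Finset.Icc 1 K, (n + 1 - 2 * k) := by
      rw [← hMtk, hMeq, arith_sum_Icc K n (by omega)]
    have hall := (Finset.sum_eq_sum_iff_of_le htb).mp hsum_eq
    have h2mem : 2 ∈ Finset.Icc 1 K := by
      rw [Finset.mem_Icc]
      omega
    have := hall 2 h2mem
    omega

end MostarAux
namespace MostarAux

variable {V : Type*} [Fintype V] {G : SimpleGraph V} {r : V}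

lemma exists_adj (hT : G.IsTree) (h2 : 2 ≤ Fintype.card V) (v : V) :
    ∃ w, G.Adj v w := by
  obtain ⟨w, hw⟩ := Fintype.exists_ne_of_one_lt_card (by omega) v
  obtain ⟨p, hp, hl⟩ := hT.isConnected.exists_path_of_dist v w
  cases p with
  | nil => exact absurd rfl hw.symm
  | cons h q => exact ⟨_, h⟩

open scoped Classical in
lemma degree_pos (hT : G.IsTree) (h2 : 2 ≤ Fintype.card V) (v : V) :
    0 < G.degree v := by
  obtain ⟨w, hw⟩ := exists_adj hT h2 v
  exact (SimpleGraph.degree_pos_iff_exists_adj G v).mpr ⟨w, hw⟩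

open scoped Classical in
lemma handshake (hT : G.IsTree) :
    ∑ v, G.degree v = 2 * (Fintype.card V - 1) := by
  classical
  rw [SimpleGraph.sum_degrees_eq_twice_card_edges]
  have := hT.card_edgeFinset
  omega

open scoped Classical in
lemma two_le_sum_aux (hT : G.IsTree) (h2 : 2 ≤ Fintype.card V) (v : V) :
    2 ≤ G.degree v + (if G.degree v = 1 then 1 else 0) := by
  have := degree_pos hT h2 v
  split <;> omega

open scoped Classical in
lemma leaves_card (hT : G.IsTree) (h2 : 2 ≤ Fintype.card V) :
    2 ≤ (univ.filter (fun v => G.degree v = 1)).card := by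
  have hsum : ∑ v : V, (2 : ℕ) ≤ ∑ v : V, (G.degree v + (if G.degree v = 1 then 1 else 0)) :=
    Finset.sum_le_sum (fun v _ => two_le_sum_aux hT h2 v)
  rw [Finset.sum_add_distrib, handshake hT, Finset.sum_boole, Finset.sum_const,
    Finset.card_univ, smul_eq_mul] at hsum
  simp only [Nat.cast_id] at hsum
  omega

open scoped Classical in
lemma exists_leaf (hT : G.IsTree) (h2 : 2 ≤ Fintype.card V) :
    ∃ r : V, G.degree r = 1 := by
  have hcard := leaves_card hT h2
  have h0 : 0 < (univ.filter (fun v => G.degree v = 1)).card := by omega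
  obtain ⟨v, hv⟩ := Finset.card_pos.mp h0
  exact ⟨v, (Finset.mem_filter.mp hv).2⟩

open scoped Classical in
lemma deg_le_two_of_leaves_le_two (hT : G.IsTree) (h2 : 2 ≤ Fintype.card V)
    (hL : (univ.filter (fun v => G.degree v = 1)).card ≤ 2) (v : V) :
    G.degree v ≤ 2 := by
  by_contra hdeg
  push_neg at hdeg
  have hsum : ∀ w ∈ univ.erase v,
      2 ≤ G.degree w + (if G.degree w = 1 then 1 else 0) :=
    fun w _ => two_le_sum_aux hT h2 w
  have h1 : ∑ w ∈ univ.erase v, (2 : ℕ)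
      ≤ ∑ w ∈ univ.erase v, (G.degree w + (if G.degree w = 1 then 1 else 0)) :=
    Finset.sum_le_sum hsum
  have h2' : (G.degree v + (if G.degree v = 1 then 1 else 0))
      + ∑ w ∈ univ.erase v, (G.degree w + (if G.degree w = 1 then 1 else 0))
      = ∑ w : V, (G.degree w + (if G.degree w = 1 then 1 else 0)) :=
    Finset.add_sum_erase univ
      (fun w => G.degree w + (if G.degree w = 1 then 1 else 0)) (Finset.mem_univ v)
  have h3 : ∑ w : V, (G.degree w + (if G.degree w = 1 then 1 else 0))
      = 2 * (Fintype.card V - 1) + (univ.filter (fun v => G.degree v = 1)).card := by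
    rw [Finset.sum_add_distrib, handshake hT, Finset.sum_boole]
    simp only [Nat.cast_id]
  rw [Finset.sum_const, Finset.card_erase_of_mem (Finset.mem_univ v),
    Finset.card_univ, smul_eq_mul] at h1
  have hv3 : 3 ≤ G.degree v + (if G.degree v = 1 then 1 else 0) := by
    split <;> omega
  omega

open scoped Classical in
lemma children_empty_of_leaf (hT : G.IsTree) {v : V} (hv : v ≠ r)
    (hdeg : G.degree v = 1) : children G r v = ∅ := by
  classical
  by_contra hne
  obtain ⟨c, hc⟩ := Finset.nonempty_of_ne_empty hne
  rw [mem_children] at hc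
  obtain ⟨hpadj, hpd⟩ := par_spec (r := r) hT hv
  have hcp : c ≠ par G r v := by
    intro hh
    rw [hh] at hc
    omega
  have h1 : c ∈ G.neighborFinset v := by
    rw [SimpleGraph.mem_neighborFinset]; exact hc.1
  have h2 : par G r v ∈ G.neighborFinset v := by
    rw [SimpleGraph.mem_neighborFinset]; exact hpadj
  have := Finset.one_lt_card.mpr ⟨c, h1, par G r v, h2, hcp⟩
  rw [← SimpleGraph.card_neighborFinset_eq_degree] at hdeg
  omega

open scoped Classical in
lemma sv_leaf (hT : G.IsTree) {v : V} (hv : v ≠ r) (hdeg : G.degree v = 1) :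
    sv G r v = 1 := by
  rw [sv_card_eq hT, children_empty_of_leaf hT hv hdeg]
  simp

open scoped Classical in
lemma Sv_root_child (hT : G.IsTree) (hdeg : G.degree r = 1) {x : V} (hx : G.Adj r x) :
    Sv G r x = univ.erase r := by
  classical
  ext z
  rw [Finset.mem_erase]
  constructor
  · intro hz
    exact ⟨fun hh => not_r_mem_Sv hT hx.ne' (hh ▸ hz), Finset.mem_univ z⟩
  · rintro ⟨hz, -⟩
    obtain ⟨p, hp, hl⟩ := hT.isConnected.exists_path_of_dist r z
    cases p with
    | nil => exact absurd rfl hz.symm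
    | cons h q =>
      rename_i y
      have hyx : y = x := by
        have h1 : y ∈ G.neighborFinset r := by
          rw [SimpleGraph.mem_neighborFinset]; exact h
        have h2 : x ∈ G.neighborFinset r := by
          rw [SimpleGraph.mem_neighborFinset]; exact hx
        rw [← SimpleGraph.card_neighborFinset_eq_degree] at hdeg
        exact Finset.card_le_one.mp (le_of_eq hdeg) y h1 x h2
      have hq : q.IsPath := ((Walk.cons_isPath_iff _ _).mp hp).1
      have hql := path_length_eq_dist hT hq
      rw [Walk.length_cons] at hl
      rw [mem_Sv, ← hyx]
      have e1 : G.dist z r = G.dist r z := SimpleGraph.dist_comm ..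
      have e2 : G.dist z y = G.dist y z := SimpleGraph.dist_comm ..
      have e3 : G.dist y r = 1 := dist_eq_one_iff_adj.mpr h.symm
      omega

open scoped Classical in
lemma sv_root_child (hT : G.IsTree) (hdeg : G.degree r = 1) {x : V} (hx : G.Adj r x) :
    sv G r x = Fintype.card V - 1 := by
  rw [sv, Sv_root_child hT hdeg hx, Finset.card_erase_of_mem (Finset.mem_univ r),
    Finset.card_univ]

open scoped Classical in
lemma leaves_le_two (hT : G.IsTree) (hn : 4 ≤ Fintype.card V)
    (hdeg : G.degree r = 1) (htk : tk G r 2 = Fintype.card V - 3) :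
    (univ.filter (fun v => G.degree v = 1)).card ≤ 2 := by
  classical
  obtain ⟨x, hx⟩ := exists_adj hT (by omega) r
  have hxadj : G.Adj r x := hx
  have hsvx : sv G r x = Fintype.card V - 1 := sv_root_child hT hdeg hxadj
  -- the complement of the tk-2 filter has exactly 2 elements
  have hsplit := Finset.card_filter_add_card_filter_not
    (s := univ.erase r)
    (p := fun v => 2 ≤ min (sv G r v) (Fintype.card V - sv G r v))
  have hcarderase : (univ.erase r).card = Fintype.card V - 1 := by
    rw [Finset.card_erase_of_mem (Finset.mem_univ r), Finset.card_univ]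
  rw [hcarderase] at hsplit
  set S1 := (univ.erase r).filter
    (fun v => ¬ (2 ≤ min (sv G r v) (Fintype.card V - sv G r v))) with hS1
  have hS1card : S1.card = 2 := by
    have := htk
    rw [tk] at this
    omega
  -- x ∈ S1 and x is not a leaf
  have hxr : x ≠ r := hxadj.ne'
  have hxS1 : x ∈ S1 := by
    rw [hS1, Finset.mem_filter, Finset.mem_erase]
    refine ⟨⟨hxr, Finset.mem_univ x⟩, ?_⟩
    rw [hsvx]
    omega
  have hxdeg : G.degree x ≠ 1 := by
    intro hh
    have := sv_leaf hT hxr hh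
    rw [hsvx] at this
    omega
  -- leaves other than r inject into S1 \ {x}
  have hLsub : (univ.filter (fun v => G.degree v = 1)).erase r ⊆ S1.erase x := by
    intro v hv
    rw [Finset.mem_erase, Finset.mem_filter] at hv
    obtain ⟨hvr, -, hvdeg⟩ := hv
    rw [Finset.mem_erase]
    constructor
    · intro hh
      exact hxdeg (hh ▸ hvdeg)
    · rw [hS1, Finset.mem_filter, Finset.mem_erase]
      refine ⟨⟨hvr, Finset.mem_univ v⟩, ?_⟩
      rw [sv_leaf hT hvr hvdeg]
      omega
  have h1 := Finset.card_le_card hLsub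
  have h2 : (S1.erase x).card = 1 := by
    rw [Finset.card_erase_of_mem hxS1, hS1card]
  have h3 : ((univ.filter (fun v => G.degree v = 1)).erase r).card
      ≥ (univ.filter (fun v => G.degree v = 1)).card - 1 :=
    Finset.pred_card_le_card_erase
  omega

end MostarAux
namespace MostarAux

variable {V : Type*} [Fintype V] {G : SimpleGraph V} {r : V}

open scoped Classical in
lemma children_subsingleton (hT : G.IsTree) (hdeg2 : ∀ v, G.degree v ≤ 2)
    {v : V} (hv : v ≠ r) {c c' : V} (hc : c ∈ children G r v)
    (hc' : c' ∈ children G r v) : c = c' := by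
  classical
  by_contra hne
  obtain ⟨hpadj, hpd⟩ := par_spec (r := r) hT hv
  rw [mem_children] at hc hc'
  have hcp : c ≠ par G r v := fun hh => by rw [hh] at hc; omega
  have hcp' : c' ≠ par G r v := fun hh => by rw [hh] at hc'; omega
  have hsub : ({c, c', par G r v} : Finset V) ⊆ G.neighborFinset v := by
    intro z hz
    simp only [Finset.mem_insert, Finset.mem_singleton] at hz
    rw [SimpleGraph.mem_neighborFinset]
    rcases hz with rfl | rfl | rfl
    · exact hc.1
    · exact hc'.1
    · exact hpadj
  have hcard : ({c, c', par G r v} : Finset V).card = 3 := by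
    rw [Finset.card_insert_of_notMem (by simp [hne, hcp]),
      Finset.card_insert_of_notMem (by simp [hcp']), Finset.card_singleton]
  have hle3 := Finset.card_le_card hsub
  rw [hcard, SimpleGraph.card_neighborFinset_eq_degree] at hle3
  have := hdeg2 v
  omega

open scoped Classical in
lemma chain_main (hT : G.IsTree) (hdeg2 : ∀ v, G.degree v ≤ 2) :
    ∀ (n : ℕ) (v : V), sv G r v ≤ n → v ≠ r →
      (∀ w ∈ Sv G r v, ∀ w' ∈ Sv G r v, sv G r w = sv G r w' → w = w') ∧
      (∀ k, 1 ≤ k → k ≤ sv G r v → ∃ w ∈ Sv G r v, sv G r w = k) := by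
  intro n
  induction n with
  | zero =>
    intro v hv
    exact absurd hv (by have := sv_pos (G := G) (r := r) (v := v); omega)
  | succ n ih =>
    intro v hv hvr
    rcases Finset.eq_empty_or_nonempty (children G r v) with hemp | ⟨c, hc⟩
    · have hSv : Sv G r v = {v} := by
        rw [Sv_eq_insert_biUnion hT v, hemp]
        simp
      have hsv1 : sv G r v = 1 := by rw [sv, hSv, Finset.card_singleton]
      constructor
      · intro w hw w' hw' _
        rw [hSv, Finset.mem_singleton] at hw hw'
        rw [hw, hw']
      · intro k hk1 hk2
        rw [hsv1] at hk2
        exact ⟨v, self_mem_Sv, by omega⟩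
    · have hsing : children G r v = {c} :=
        Finset.eq_singleton_iff_unique_mem.mpr
          ⟨hc, fun x hx => children_subsingleton hT hdeg2 hvr hx hc⟩
      have hSv : Sv G r v = insert v (Sv G r c) := by
        rw [Sv_eq_insert_biUnion hT v, hsing, Finset.singleton_biUnion]
      have hsv : sv G r v = 1 + sv G r c := by
        rw [sv_card_eq hT, hsing, Finset.sum_singleton]
      have hcr : c ≠ r := by
        intro hh
        have hmem := child_mem_Sv hT hc
        rw [hh] at hmem
        exact not_r_mem_Sv hT hvr hmem
      have hcv : c ≠ v := ((mem_children.mp hc).1.ne).symm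
      have hclt : sv G r c < sv G r v := sv_lt_of_mem hT (child_mem_Sv hT hc) hcv
      obtain ⟨ihinj, ihsurj⟩ := ih c (by omega) hcr
      constructor
      · intro w hw w' hw' heq
        rw [hSv, Finset.mem_insert] at hw hw'
        rcases hw with rfl | hw <;> rcases hw' with rfl | hw'
        · rfl
        · exact absurd heq (by have := sv_le_of_mem hT hw'; omega)
        · exact absurd heq (by have := sv_le_of_mem hT hw; omega)
        · exact ihinj w hw w' hw' heq
      · intro k hk1 hk2
        by_cases hkv : k = sv G r v
        · exact ⟨v, self_mem_Sv, hkv.symm⟩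
        · obtain ⟨w, hw, hws⟩ := ihsurj k hk1 (by omega)
          exact ⟨w, by rw [hSv]; exact Finset.mem_insert_of_mem hw, hws⟩

open scoped Classical in
lemma sv_par (hT : G.IsTree) (hdeg2 : ∀ v, G.degree v ≤ 2) {v : V}
    (hv : v ≠ r) (hpr : par G r v ≠ r) :
    sv G r (par G r v) = sv G r v + 1 := by
  obtain ⟨hpadj, hpd⟩ := par_spec (r := r) hT hv
  have hvchild : v ∈ children G r (par G r v) := by
    rw [mem_children]
    exact ⟨hpadj.symm, by omega⟩
  have hsing : children G r (par G r v) = {v} :=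
    Finset.eq_singleton_iff_unique_mem.mpr
      ⟨hvchild, fun x hx => children_subsingleton hT hdeg2 hpr hx hvchild⟩
  rw [sv_card_eq hT, hsing, Finset.sum_singleton]
  omega

lemma adj_to_par (hT : G.IsTree) {a b : V} (hab : G.Adj a b) :
    par G r a = b ∨ par G r b = a := by
  have e1 : G.dist r a = G.dist a r := SimpleGraph.dist_comm ..
  have e2 : G.dist r b = G.dist b r := SimpleGraph.dist_comm ..
  rcases parity hT hab r with hh | hh
  · right
    exact par_eq hT hab.symm (by omega)
  · left
    exact par_eq hT hab (by omega)

open scoped Classical in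
lemma adj_root_iff (hT : G.IsTree) (hr : G.degree r = 1) {x : V} (hx : G.Adj r x)
    (b : V) : G.Adj r b ↔ b = x := by
  constructor
  · intro hb
    have h1 : b ∈ G.neighborFinset r := by
      rw [SimpleGraph.mem_neighborFinset]; exact hb
    have h2 : x ∈ G.neighborFinset r := by
      rw [SimpleGraph.mem_neighborFinset]; exact hx
    have hd : (G.neighborFinset r).card ≤ 1 := by
      rw [SimpleGraph.card_neighborFinset_eq_degree, hr]
    exact Finset.card_le_one.mp hd b h1 x h2
  · rintro rfl
    exact hx

open scoped Classical in
lemma path_structure (hT : G.IsTree) (hn : 4 ≤ Fintype.card V)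
    (hr : G.degree r = 1) (hdeg2 : ∀ v, G.degree v ≤ 2) :
    Nonempty (G ≃g SimpleGraph.pathGraph (Fintype.card V)) := by
  classical
  set n := Fintype.card V with hn'
  obtain ⟨x, hx⟩ := exists_adj hT (by omega) r
  have hxr : x ≠ r := hx.ne'
  have hsvx : sv G r x = n - 1 := sv_root_child hT hr hx
  have hSvx : Sv G r x = univ.erase r := Sv_root_child hT hr hx
  obtain ⟨hInj0, hSurj0⟩ := chain_main (r := r) hT hdeg2 (sv G r x) x le_rfl hxr
  have hInj : ∀ a, a ≠ r → ∀ b, b ≠ r → sv G r a = sv G r b → a = b := by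
    intro a ha b hb heq
    have hamem : a ∈ Sv G r x := by
      rw [hSvx, Finset.mem_erase]; exact ⟨ha, Finset.mem_univ a⟩
    have hbmem : b ∈ Sv G r x := by
      rw [hSvx, Finset.mem_erase]; exact ⟨hb, Finset.mem_univ b⟩
    exact hInj0 a hamem b hbmem heq
  have hb1 : ∀ a, a ≠ r → 1 ≤ sv G r a ∧ sv G r a ≤ n - 1 := by
    intro a ha
    exact ⟨sv_pos, sv_le_card_sub_one hT ha⟩
  -- adjacency in terms of sv
  have hadj_sv : ∀ a, a ≠ r → ∀ b, b ≠ r →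
      (G.Adj a b ↔ sv G r a = sv G r b + 1 ∨ sv G r b = sv G r a + 1) := by
    intro a ha b hb
    constructor
    · intro hab
      rcases adj_to_par (r := r) hT hab with hp | hp
      · right
        rw [← hp]
        exact sv_par hT hdeg2 ha (by rw [hp]; exact hb)
      · left
        rw [← hp]
        exact sv_par hT hdeg2 hb (by rw [hp]; exact ha)
    · intro hsv
      rcases hsv with hsv | hsv
      · -- b = par of ... : sv a = sv b + 1 means a is parent of b
        by_cases hpb : par G r b = r
        · exfalso
          have hbx : b = x := (adj_root_iff hT hr hx b).mp
            (by rw [← hpb]; exact (par_spec (r := r) hT hb).1.symm)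
          have := hb1 a ha
          rw [hbx, hsvx] at hsv
          omega
        · have := sv_par hT hdeg2 hb hpb
          have hpa : par G r b = a := hInj _ hpb _ ha (by omega)
          rw [← hpa]
          exact (par_spec (r := r) hT hb).1.symm
      · by_cases hpa : par G r a = r
        · exfalso
          have hax : a = x := (adj_root_iff hT hr hx a).mp
            (by rw [← hpa]; exact (par_spec (r := r) hT ha).1.symm)
          have := hb1 b hb
          rw [hax, hsvx] at hsv
          omega
        · have := sv_par hT hdeg2 ha hpa
          have hpb : par G r a = b := hInj _ hpa _ hb (by omega)
          rw [← hpb]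
          exact (par_spec (r := r) hT ha).1
  -- the vertex map
  have hnpos : 0 < n := by omega
  let φ : V → Fin n := fun v =>
    if v = r then ⟨0, hnpos⟩
    else ⟨n - sv G r v, by have := sv_pos (G := G) (r := r) (v := v); omega⟩
  have hφr : φ r = ⟨0, hnpos⟩ := by simp [φ]
  have hφ : ∀ v, v ≠ r → (φ v : ℕ) = n - sv G r v := by
    intro v hv
    simp [φ, hv]
  have hφinj : Function.Injective φ := by
    intro a b heq
    by_cases ha : a = r <;> by_cases hb : b = r
    · rw [ha, hb]
    · exfalso
      have h1 := hφ b hb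
      have h2 := hb1 b hb
      rw [ha, hφr] at heq
      have : (φ b : ℕ) = 0 := by rw [← heq]
      omega
    · exfalso
      have h1 := hφ a ha
      have h2 := hb1 a ha
      rw [hb, hφr] at heq
      have : (φ a : ℕ) = 0 := by rw [heq]
      omega
    · have h1 := hφ a ha
      have h2 := hφ b hb
      have h3 := hb1 a ha
      have h4 := hb1 b hb
      have h5 : (φ a : ℕ) = (φ b : ℕ) := by rw [heq]
      exact hInj a ha b hb (by omega)
  have hφbij : Function.Bijective φ :=
    (Fintype.bijective_iff_injective_and_card φ).mpr ⟨hφinj, by simp [hn']⟩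
  refine ⟨⟨Equiv.ofBijective φ hφbij, ?_⟩⟩
  intro a b
  show (SimpleGraph.pathGraph n).Adj (φ a) (φ b) ↔ G.Adj a b
  rw [SimpleGraph.pathGraph_adj]
  by_cases ha : a = r <;> by_cases hb : b = r
  · rw [ha, hb, hφr]
    simp
  · rw [ha]
    have h1 := hφ b hb
    have h2 := hb1 b hb
    rw [hφr]
    have hbx : G.Adj r b ↔ b = x := adj_root_iff hT hr hx b
    have hxx : b = x ↔ sv G r b = n - 1 := by
      constructor
      · rintro rfl; exact hsvx
      · intro hh; exact hInj b hb x hxr (by rw [hh, hsvx])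
    rw [hbx, hxx]
    simp only [Fin.val_mk]
    omega
  · rw [hb]
    have h1 := hφ a ha
    have h2 := hb1 a ha
    rw [hφr]
    have hbx : G.Adj r a ↔ a = x := adj_root_iff hT hr hx a
    have hxx : a = x ↔ sv G r a = n - 1 := by
      constructor
      · rintro rfl; exact hsvx
      · intro hh; exact hInj a ha x hxr (by rw [hh, hsvx])
    have hcomm : G.Adj a r ↔ G.Adj r a := ⟨Adj.symm, Adj.symm⟩
    rw [hcomm, hbx, hxx]
    simp only [Fin.val_mk]
    omega
  · have h1 := hφ a ha
    have h2 := hφ b hb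
    have h3 := hb1 a ha
    have h4 := hb1 b hb
    rw [hadj_sv a ha b hb]
    omega

end MostarAux
namespace MostarAux

variable {V : Type*} [Fintype V] {G : SimpleGraph V} {r : V}

open scoped Classical in
lemma sum_min_Icc (n : ℕ) (hn : 4 ≤ n) :
    ∑ k ∈ Finset.Icc 1 (n - 1), min k (n - k) = (n / 2) * (n - n / 2) := by
  have hm : ∀ k ∈ Finset.Icc 1 (n - 1), min k (n - k)
      = ∑ j ∈ Finset.Icc 1 (n / 2), (if j ≤ min k (n - k) then 1 else 0) := by
    intro k hk
    rw [Finset.mem_Icc] at hk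
    rw [Finset.sum_boole]
    have hfe : (Finset.Icc 1 (n / 2)).filter (fun j => j ≤ min k (n - k))
        = Finset.Icc 1 (min k (n - k)) := by
      ext j
      simp only [Finset.mem_filter, Finset.mem_Icc]
      omega
    rw [hfe, Nat.card_Icc]
    simp
  rw [Finset.sum_congr rfl hm, Finset.sum_comm, ← arith_sum_Icc (n / 2) n (by omega)]
  apply Finset.sum_congr rfl
  intro j hj
  rw [Finset.mem_Icc] at hj
  rw [Finset.sum_boole]
  have hfe : (Finset.Icc 1 (n - 1)).filter (fun k => j ≤ min k (n - k))
      = Finset.Icc j (n - j) := by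
    ext k
    simp only [Finset.mem_filter, Finset.mem_Icc]
    omega
  rw [hfe, Nat.card_Icc]
  simp only [Nat.cast_id]
  omega

open scoped Classical in
lemma sv_global (hT : G.IsTree) (hn : 4 ≤ Fintype.card V)
    (hr : G.degree r = 1) (hdeg2 : ∀ v, G.degree v ≤ 2) :
    (∀ a, a ≠ r → ∀ b, b ≠ r → sv G r a = sv G r b → a = b) ∧
    (∀ k, 1 ≤ k → k ≤ Fintype.card V - 1 → ∃ v, v ≠ r ∧ sv G r v = k) := by
  obtain ⟨x, hx⟩ := exists_adj hT (by omega) r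
  have hxr : x ≠ r := hx.ne'
  have hsvx : sv G r x = Fintype.card V - 1 := sv_root_child hT hr hx
  have hSvx : Sv G r x = univ.erase r := Sv_root_child hT hr hx
  obtain ⟨hInj0, hSurj0⟩ := chain_main (r := r) hT hdeg2 (sv G r x) x le_rfl hxr
  constructor
  · intro a ha b hb heq
    have hamem : a ∈ Sv G r x := by
      rw [hSvx, Finset.mem_erase]; exact ⟨ha, Finset.mem_univ a⟩
    have hbmem : b ∈ Sv G r x := by
      rw [hSvx, Finset.mem_erase]; exact ⟨hb, Finset.mem_univ b⟩
    exact hInj0 a hamem b hbmem heq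
  · intro k hk1 hk2
    obtain ⟨w, hw, hws⟩ := hSurj0 k hk1 (by omega)
    rw [hSvx, Finset.mem_erase] at hw
    exact ⟨w, hw.1, hws⟩

open scoped Classical in
lemma path_mostar (hT : G.IsTree) (hn : 4 ≤ Fintype.card V)
    (hr : G.degree r = 1) (hdeg2 : ∀ v, G.degree v ≤ 2) :
    mostar G = (Fintype.card V - 1) ^ 2 / 2 := by
  classical
  obtain ⟨hInj, hSurj⟩ := sv_global hT hn hr hdeg2
  have hsum : mostar G = ∑ k ∈ Finset.Icc 1 (Fintype.card V - 1),
      ((Fintype.card V : ℤ) - 2 * k).natAbs := by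
    rw [mostar_eq_sum hT r]
    apply Finset.sum_bij (i := fun v _ => sv G r v)
    · intro a ha
      rw [Finset.mem_Icc]
      exact ⟨sv_pos, sv_le_card_sub_one hT (Finset.mem_erase.mp ha).1⟩
    · intro a ha b hb heq
      exact hInj a (Finset.mem_erase.mp ha).1 b (Finset.mem_erase.mp hb).1 heq
    · intro k hk
      rw [Finset.mem_Icc] at hk
      obtain ⟨v, hv, hvs⟩ := hSurj k hk.1 hk.2
      exact ⟨v, Finset.mem_erase.mpr ⟨hv, Finset.mem_univ v⟩, hvs⟩
    · intro a ha
      rfl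
  have hterm : ∀ k ∈ Finset.Icc 1 (Fintype.card V - 1),
      ((Fintype.card V : ℤ) - 2 * k).natAbs + 2 * min k (Fintype.card V - k)
        = Fintype.card V := by
    intro k hk
    rw [Finset.mem_Icc] at hk
    omega
  have htot : mostar G
      + 2 * ((Fintype.card V / 2) * (Fintype.card V - Fintype.card V / 2))
      = (Fintype.card V - 1) * Fintype.card V := by
    rw [hsum, ← sum_min_Icc (Fintype.card V) hn, Finset.mul_sum,
      ← Finset.sum_add_distrib, Finset.sum_congr rfl hterm, Finset.sum_const,
      Nat.card_Icc, smul_eq_mul]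
    have hcc : Fintype.card V - 1 + 1 - 1 = Fintype.card V - 1 := by omega
    rw [hcc]
  have hid := arith_parity (Fintype.card V) hn
  omega

lemma iso_degree {W : Type*} [Fintype W] {G' : SimpleGraph W} (f : G ≃g G') (v : V)
    [Fintype (G.neighborSet v)] [Fintype (G'.neighborSet (f v))] :
    G.degree v = G'.degree (f v) := by
  rw [← SimpleGraph.card_neighborSet_eq_degree, ← SimpleGraph.card_neighborSet_eq_degree]
  exact Fintype.card_congr (f.mapNeighborSet v)

open scoped Classical in
lemma pathGraph_degree_le_two {n : ℕ} (i : Fin n) :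
    (SimpleGraph.pathGraph n).degree i ≤ 2 := by
  classical
  rw [← SimpleGraph.card_neighborFinset_eq_degree]
  have himg : ((SimpleGraph.pathGraph n).neighborFinset i).image Fin.val
      ⊆ {i.val + 1, i.val - 1} := by
    intro m hm
    simp only [Finset.mem_image] at hm
    obtain ⟨j, hj, rfl⟩ := hm
    rw [SimpleGraph.mem_neighborFinset, SimpleGraph.pathGraph_adj] at hj
    simp only [Finset.mem_insert, Finset.mem_singleton]
    omega
  have h1 := Finset.card_le_card himg
  rw [Finset.card_image_of_injective _ Fin.val_injective] at h1
  have h2 : ({i.val + 1, i.val - 1} : Finset ℕ).card ≤ 2 := by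
    apply le_trans (Finset.card_insert_le _ _)
    simp
  omega

open scoped Classical in
lemma pathGraph_degree_zero {n : ℕ} (hn : 2 ≤ n) :
    (SimpleGraph.pathGraph n).degree (⟨0, by omega⟩ : Fin n) = 1 := by
  classical
  rw [← SimpleGraph.card_neighborFinset_eq_degree]
  have : (SimpleGraph.pathGraph n).neighborFinset (⟨0, by omega⟩ : Fin n)
      = {(⟨1, by omega⟩ : Fin n)} := by
    ext j
    rw [SimpleGraph.mem_neighborFinset, SimpleGraph.pathGraph_adj]
    simp only [Finset.mem_singleton]
    constructor
    · intro h
      apply Fin.ext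
      simp only []
      omega
    · intro h
      subst h
      simp
  rw [this, Finset.card_singleton]

open scoped Classical in
lemma star_structure_mostar (hT : G.IsTree) (hn : 4 ≤ Fintype.card V) {c : V}
    (hc : ∀ a b, G.Adj a b ↔ (a ≠ b ∧ (a = c ∨ b = c))) :
    mostar G = (Fintype.card V - 1) * (Fintype.card V - 2) := by
  classical
  have hsv : ∀ v, v ≠ c → sv G c v = 1 := by
    intro v hv
    have hSv : Sv G c v = {v} := by
      ext z
      rw [mem_Sv, Finset.mem_singleton]
      have hdvc : G.dist v c = 1 :=
        dist_eq_one_iff_adj.mpr ((hc v c).mpr ⟨hv, Or.inr rfl⟩)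
      constructor
      · intro hz
        by_contra hzv
        have hzc : z ≠ c := by
          intro hh
          subst hh
          rw [SimpleGraph.dist_self] at hz
          omega
        have hdzc : G.dist z c = 1 :=
          dist_eq_one_iff_adj.mpr ((hc z c).mpr ⟨hzc, Or.inr rfl⟩)
        have hnadj : ¬ G.Adj z v := by
          rw [hc]
          push_neg
          intro _
          exact ⟨hzc, hv⟩
        have hdzv : G.dist z v ≠ 1 := fun hh => hnadj (dist_eq_one_iff_adj.mp hh)
        have hdzv0 : G.dist z v ≠ 0 := fun hh =>
          hzv (hT.isConnected.dist_eq_zero_iff.mp hh)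
        omega
      · rintro rfl
        rw [SimpleGraph.dist_self]
        omega
    rw [sv, hSv, Finset.card_singleton]
  rw [mostar_eq_sum hT c]
  have hterm : ∀ v ∈ univ.erase c,
      ((Fintype.card V : ℤ) - 2 * sv G c v).natAbs = Fintype.card V - 2 := by
    intro v hv
    rw [hsv v (Finset.mem_erase.mp hv).1]
    omega
  rw [Finset.sum_congr rfl hterm, Finset.sum_const,
    Finset.card_erase_of_mem (Finset.mem_univ c), Finset.card_univ, smul_eq_mul]

lemma star_structure_iso (hn : 4 ≤ Fintype.card V) {c : V}
    (hc : ∀ a b, G.Adj a b ↔ (a ≠ b ∧ (a = c ∨ b = c))) :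
    Nonempty (G ≃g _root_.starGraph (Fintype.card V - 1)) := by
  have hcards : Fintype.card V = Fintype.card V - 1 + 1 := by omega
  let e0 : V ≃ Fin (Fintype.card V - 1 + 1) := Fintype.equivFinOfCardEq (by omega)
  let e : V ≃ Fin (Fintype.card V - 1 + 1) := e0.trans (Equiv.swap (e0 c) 0)
  have hec : e c = 0 := by
    simp [e, Equiv.swap_apply_left]
  have hiff : ∀ a, e a = 0 ↔ a = c := by
    intro a
    constructor
    · intro h
      apply e.injective
      rw [h, hec]
    · rintro rfl
      exact hec
  refine ⟨⟨e, ?_⟩⟩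
  intro a b
  show (_root_.starGraph (Fintype.card V - 1)).Adj (e a) (e b) ↔ G.Adj a b
  rw [hc]
  show (e a ≠ e b ∧ (e a = 0 ∨ e b = 0)) ↔ _
  rw [hiff a, hiff b, e.injective.ne_iff]

lemma star_from_iso (f : G ≃g _root_.starGraph (Fintype.card V - 1)) :
    ∃ c, ∀ a b, G.Adj a b ↔ (a ≠ b ∧ (a = c ∨ b = c)) := by
  refine ⟨f.symm 0, fun a b => ?_⟩
  rw [← f.map_rel_iff]
  show (f a ≠ f b ∧ (f a = 0 ∨ f b = 0)) ↔ _
  constructor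
  · rintro ⟨hne, h | h⟩
    · exact ⟨fun hh => hne (by rw [hh]),
        Or.inl (by rw [← h, RelIso.symm_apply_apply])⟩
    · exact ⟨fun hh => hne (by rw [hh]),
        Or.inr (by rw [← h, RelIso.symm_apply_apply])⟩
  · rintro ⟨hne, rfl | rfl⟩
    · refine ⟨fun hh => hne (f.toEquiv.injective hh), Or.inl ?_⟩
      exact RelIso.apply_symm_apply f 0
    · refine ⟨fun hh => hne (f.toEquiv.injective hh), Or.inr ?_⟩
      exact RelIso.apply_symm_apply f 0

end MostarAux
namespace MostarAux

variable {V : Type*} [Fintype V] {G : SimpleGraph V} {r : V}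

open scoped Classical in
lemma star_from_eq (hT : G.IsTree) (hn : 4 ≤ Fintype.card V)
    (heq : mostar G = (Fintype.card V - 1) * (Fintype.card V - 2)) :
    ∃ c, ∀ a b, G.Adj a b ↔ (a ≠ b ∧ (a = c ∨ b = c)) := by
  classical
  obtain ⟨r, hr⟩ := exists_leaf hT (by omega)
  obtain ⟨x, hx⟩ := exists_adj hT (by omega) r
  have hxr : x ≠ r := hx.ne'
  have hsvx : sv G r x = Fintype.card V - 1 := sv_root_child hT hr hx
  have hSvx : Sv G r x = univ.erase r := Sv_root_child hT hr hx
  have hcarderase : (univ.erase r).card = Fintype.card V - 1 := by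
    rw [Finset.card_erase_of_mem (Finset.mem_univ r), Finset.card_univ]
  have hlt : ∀ w ∈ univ.erase r,
      ((Fintype.card V : ℤ) - 2 * sv G r w).natAbs ≤ Fintype.card V - 2 := by
    intro w hw
    have h1 : 1 ≤ sv G r w := sv_pos
    have h2 := sv_le_card_sub_one hT (Finset.mem_erase.mp hw).1
    omega
  have hall : ∀ v ∈ univ.erase r,
      ((Fintype.card V : ℤ) - 2 * sv G r v).natAbs = Fintype.card V - 2 := by
    by_contra hcon
    push_neg at hcon
    obtain ⟨v, hv, hvne⟩ := hcon
    have hstrict := Finset.sum_lt_sum hlt ⟨v, hv, lt_of_le_of_ne (hlt v hv) hvne⟩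
    rw [Finset.sum_const, hcarderase, smul_eq_mul, ← mostar_eq_sum hT r] at hstrict
    omega
  have hsv : ∀ v, v ≠ r → v ≠ x → sv G r v = 1 := by
    intro v hvr hvx
    have h := hall v (Finset.mem_erase.mpr ⟨hvr, Finset.mem_univ v⟩)
    have h1 : 1 ≤ sv G r v := sv_pos
    have h2 := sv_le_card_sub_one hT hvr
    have hcase : sv G r v = 1 ∨ sv G r v = Fintype.card V - 1 := by omega
    rcases hcase with h | h
    · exact h
    · exfalso
      have hsub : Sv G r v ⊆ univ.erase r := by
        intro z hz
        rw [Finset.mem_erase]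
        exact ⟨fun hh => not_r_mem_Sv hT hvr (hh ▸ hz), Finset.mem_univ z⟩
      have hEq : Sv G r v = univ.erase r :=
        Finset.eq_of_subset_of_card_le hsub (by
          rw [hcarderase]
          exact le_of_eq h.symm)
      have hxm : x ∈ Sv G r v := by
        rw [hEq, Finset.mem_erase]; exact ⟨hxr, Finset.mem_univ x⟩
      have hvm : v ∈ Sv G r x := by
        rw [hSvx, Finset.mem_erase]; exact ⟨hvr, Finset.mem_univ v⟩
      exact hvx (eq_of_mem_Sv_mem_Sv hT hxm hvm)
  have hpar : ∀ v, v ≠ r → v ≠ x → par G r v = x := by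
    intro v hvr hvx
    obtain ⟨hpadj, hpd⟩ := par_spec (r := r) hT hvr
    by_cases hpx : par G r v = x
    · exact hpx
    · exfalso
      have hpr : par G r v ≠ r := by
        intro hh
        rw [hh] at hpadj
        exact hvx ((adj_root_iff hT hr hx v).mp hpadj.symm)
      have hsp : sv G r (par G r v) = 1 := hsv _ hpr hpx
      have hvchild : v ∈ children G r (par G r v) :=
        mem_children.mpr ⟨hpadj.symm, by omega⟩
      have hvm := child_mem_Sv hT hvchild
      have h2 : ({v, par G r v} : Finset V) ⊆ Sv G r (par G r v) := by
        intro z hz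
        simp only [Finset.mem_insert, Finset.mem_singleton] at hz
        rcases hz with rfl | rfl
        · exact hvm
        · exact self_mem_Sv
      have h3 := Finset.card_le_card h2
      rw [Finset.card_insert_of_notMem (by simp [hpadj.ne]),
        Finset.card_singleton] at h3
      have : (Sv G r (par G r v)).card = sv G r (par G r v) := rfl
      omega
  refine ⟨x, fun a b => ?_⟩
  constructor
  · intro hab
    refine ⟨hab.ne, ?_⟩
    by_contra hcon
    push_neg at hcon
    obtain ⟨hax, hbx⟩ := hcon
    have har : a ≠ r := by
      intro hh
      rw [hh] at hab
      exact hbx ((adj_root_iff hT hr hx b).mp hab)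
    have hbr : b ≠ r := by
      intro hh
      rw [hh] at hab
      exact hax ((adj_root_iff hT hr hx a).mp hab.symm)
    rcases adj_to_par (r := r) hT hab with hp | hp
    · rw [hpar a har hax] at hp
      exact hbx hp.symm
    · rw [hpar b hbr hbx] at hp
      exact hax hp.symm
  · rintro ⟨hne, rfl | rfl⟩
    · by_cases hbr : b = r
      · rw [hbr]
        exact hx.symm
      · have hp := hpar b hbr (fun hh => hne hh.symm)
        have := (par_spec (r := r) hT hbr).1
        rw [hp] at this
        exact this.symm
    · by_cases har : a = r
      · rw [har]
        exact hx
      · have hp := hpar a har hne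
        have := (par_spec (r := r) hT har).1
        rw [hp] at this
        exact this

end MostarAux


open MostarAux in
theorem mostar_tree_extremal {V : Type*} [Fintype V] (G : SimpleGraph V)
    (hT : G.IsTree) (hn : 3 < Fintype.card V) :
    (Fintype.card V - 1) ^ 2 / 2 ≤ mostar G ∧
    mostar G ≤ (Fintype.card V - 1) * (Fintype.card V - 2) ∧
    (mostar G = (Fintype.card V - 1) ^ 2 / 2 ↔
      Nonempty (G ≃g SimpleGraph.pathGraph (Fintype.card V))) ∧
    (mostar G = (Fintype.card V - 1) * (Fintype.card V - 2) ↔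
      Nonempty (G ≃g _root_.starGraph (Fintype.card V - 1))) := by
  classical
  obtain ⟨r, hr⟩ := exists_leaf hT (by omega)
  have hlow := lower_main hT r (by omega)
  refine ⟨hlow.1, ?_, ⟨?_, ?_⟩, ⟨?_, ?_⟩⟩
  · -- upper bound
    rw [mostar_eq_sum hT r]
    have hterm : ∀ w ∈ univ.erase r,
        ((Fintype.card V : ℤ) - 2 * sv G r w).natAbs ≤ Fintype.card V - 2 := by
      intro w hw
      have h1 : 1 ≤ sv G r w := sv_pos
      have h2 := sv_le_card_sub_one hT (Finset.mem_erase.mp hw).1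
      omega
    calc ∑ v ∈ univ.erase r, ((Fintype.card V : ℤ) - 2 * sv G r v).natAbs
        ≤ ∑ _v ∈ univ.erase r, (Fintype.card V - 2) := Finset.sum_le_sum hterm
      _ = (Fintype.card V - 1) * (Fintype.card V - 2) := by
          rw [Finset.sum_const, Finset.card_erase_of_mem (Finset.mem_univ r),
            Finset.card_univ, smul_eq_mul]
  · intro heq
    have htk := hlow.2 heq
    have hL2 := leaves_le_two hT (by omega) hr htk
    have hdeg2 := fun v => deg_le_two_of_leaves_le_two hT (by omega) hL2 v
    exact path_structure hT (by omega) hr hdeg2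
  · rintro ⟨f⟩
    have hdegv : ∀ v, G.degree v
        = (SimpleGraph.pathGraph (Fintype.card V)).degree (f v) :=
      fun v => iso_degree f v
    have hdeg2 : ∀ v, G.degree v ≤ 2 := fun v => by
      rw [hdegv v]
      exact pathGraph_degree_le_two _
    have hr' : G.degree (f.symm (⟨0, by omega⟩ : Fin (Fintype.card V))) = 1 := by
      rw [hdegv, RelIso.apply_symm_apply]
      exact pathGraph_degree_zero (by omega)
    exact path_mostar hT (by omega) hr' hdeg2
  · intro heq
    obtain ⟨c, hc⟩ := star_from_eq hT (by omega) heq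
    exact star_structure_iso (by omega) hc
  · rintro ⟨f⟩
    obtain ⟨c, hc⟩ := star_from_iso f
    exact star_structure_mostar hT (by omega) hc
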